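/- For every integer s ≥ 2 the following hold: (i) conv{(−1,−2),(0,−1),(1,s),(0,s−1),(−1,−1)} = conv{(0,0),(1,1)} + conv{(−1,−2),(−1,−1),(0,s−1)} (Minkowski sum); (ii) 𝒫^s := conv{(−1,−2),(0,−1),(1,s),(0,s−1),(−1,−1)} ⊂ ℝ² is a toric diagram with exactly five extreme points; and (iii) the interior of 𝒫^s contains exactly s − 1 points of ℤ². -/

import Mathlib

open Set Pointwise

noncomputable section

/-- We work in the plane `ℝ × ℝ`. -/
abbrev V : Type := ℝ × ℝ

/-- The embedding of the lattice `ℤ × ℤ` into the plane. -/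
def toR (p : ℤ × ℤ) : V := ((p.1 : ℝ), (p.2 : ℝ))

/-- The set of lattice points of the plane. -/
def latticePoints : Set V := Set.range toR

/-- A lattice polytope: the convex hull of a nonempty finite set of lattice points. -/
def IsLatticePolytope (P : Set V) : Prop :=
  ∃ S : Finset (ℤ × ℤ), S.Nonempty ∧ P = convexHull ℝ (toR '' ↑S)

/-- A toric diagram: a two-dimensional lattice polytope such that every lattice point on its
topological boundary is an extreme point. -/
def IsToricDiagram (P : Set V) : Prop :=
  IsLatticePolytope P ∧ (interior P).Nonempty ∧
    ∀ x ∈ frontier P, x ∈ latticePoints → x ∈ P.extremePoints ℝ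

/-- A lattice segment: the convex hull of two distinct lattice points. -/
def IsLatticeSegment (L : Set V) : Prop :=
  ∃ a b : ℤ × ℤ, a ≠ b ∧ L = segment ℝ (toR a) (toR b)

/-- A lattice triangle: the convex hull of three affinely independent lattice points. -/
def IsLatticeTriangle (T : Set V) : Prop :=
  ∃ a b c : ℤ × ℤ, AffineIndependent ℝ ![toR a, toR b, toR c] ∧
    T = convexHull ℝ {toR a, toR b, toR c}

/-- `E` is an edge of `P`: a maximal (nondegenerate) line segment contained in the
topological boundary of `P`. -/
def IsEdge (P E : Set V) : Prop :=
  (∃ a b : V, a ≠ b ∧ E = segment ℝ a b) ∧ E ⊆ frontier P ∧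
    ∀ F : Set V, (∃ a b : V, F = segment ℝ a b) → F ⊆ frontier P → E ⊆ F → F = E

/-- `v` is an edge vector of `P` (the difference of the endpoints of some edge of `P`). -/
def IsEdgeVector (P : Set V) (v : V) : Prop :=
  ∃ a b : V, a ≠ b ∧ IsEdge P (segment ℝ a b) ∧ v = b - a

/-- Two plane vectors are parallel when their cross product vanishes. -/
def Par (v w : V) : Prop := v.1 * w.2 = v.2 * w.1

/-- `P` admits a lattice maximal Minkowski decomposition: `P` is a Minkowski sum of at
least two lattice polytopes, each of which is a lattice segment or a lattice triangle. -/
def HasLatticeMaximalDecomposition (P : Set V) : Prop :=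
  ∃ (m : ℕ) (Ps : Fin (m + 1) → Set V), 1 ≤ m ∧
    P = ∑ k, Ps k ∧ ∀ k, IsLatticeSegment (Ps k) ∨ IsLatticeTriangle (Ps k)

/-- A convex polytope: the convex hull of a nonempty finite set of points. -/
def IsConvexPolytope (A : Set V) : Prop :=
  ∃ S : Finset V, S.Nonempty ∧ A = convexHull ℝ (↑S : Set V)

/-- `A` is a homothet `λ • P + t` (`λ > 0`) of `P`. -/
def IsHomothet (A P : Set V) : Prop :=
  ∃ (l : ℝ) (t : V), 0 < l ∧ A = (fun x => l • x + t) '' P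

/-- A (nondegenerate) line segment. -/
def IsSegmentSet (A : Set V) : Prop := ∃ a b : V, a ≠ b ∧ A = segment ℝ a b

/-- A triangle: the convex hull of three affinely independent points. -/
def IsTriangleSet (A : Set V) : Prop :=
  ∃ a b c : V, AffineIndependent ℝ ![a, b, c] ∧ A = convexHull ℝ {a, b, c}

/-- A convex polytope is Minkowski-indecomposable if in every Minkowski decomposition
into two convex polytopes, one of the summands is a point or a homothet of the polytope. -/
def MinkowskiIndecomposable (Q : Set V) : Prop :=
  ∀ A B : Set V, IsConvexPolytope A → IsConvexPolytope B → Q = A + B →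
    (∃ x, A = {x}) ∨ IsHomothet A Q ∨ (∃ x, B = {x}) ∨ IsHomothet B Q

/-- A parallelogram: a quadrilateral whose vertices `v₁ v₂ v₃ v₄` in cyclic order satisfy
`v₁ + v₃ = v₂ + v₄`. -/
def IsParallelogram (P : Set V) : Prop :=
  ∃ w : Fin 4 → V, Function.Injective w ∧ P.extremePoints ℝ = Set.range w ∧
    w 0 + w 2 = w 1 + w 3

/-- The Gauntlett–Martelli–Sparks–Waldram toric diagram `𝒴^{p,q}`. -/
def GMSW (p q : ℤ) : Set V :=
  convexHull ℝ (toR '' ({(0, 0), (1, 0), (p, p), (p - q - 1, p - q)} : Set (ℤ × ℤ)))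

/-- Cross product of lattice vectors. -/
def crossZ (u w : ℤ × ℤ) : ℤ := u.1 * w.2 - u.2 * w.1

/-- The pentagon `𝒫^s = conv{(−1,−2),(0,−1),(1,s),(0,s−1),(−1,−1)}`, the `r = 1` member of
the Cho–Futaki–Ono family. -/
def cfoPentagon (s : ℕ) : Set V :=
  convexHull ℝ {((-1 : ℝ), (-2 : ℝ)), ((0 : ℝ), (-1 : ℝ)), ((1 : ℝ), (s : ℝ)),
    ((0 : ℝ), (s : ℝ) - 1), ((-1 : ℝ), (-1 : ℝ))}

/-! ### Auxiliary lemmas for statement 8 -/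

lemma st8_mem_hull3 {a b c p : V} {α β γ : ℝ} (ha : 0 ≤ α) (hb : 0 ≤ β) (hc : 0 ≤ γ)
    (hsum : α + β + γ = 1) (hp : α • a + β • b + γ • c = p) :
    p ∈ convexHull ℝ ({a, b, c} : Set V) := by
  have h := Finset.centerMass_mem_convexHull (t := (Finset.univ : Finset (Fin 3)))
    (w := ![α, β, γ]) (z := ![a, b, c]) (s := ({a, b, c} : Set V))
    (by intro i _; fin_cases i <;> simpa) (by simp [Fin.sum_univ_three, hsum])
    (by intro i _; fin_cases i <;> simp)
  rwa [Finset.centerMass, show ∑ i, ![α,β,γ] i = 1 by simp [Fin.sum_univ_three, hsum],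
    inv_one, one_smul, Fin.sum_univ_three, show (![α,β,γ] 0 : ℝ) = α from rfl,
    show (![α,β,γ] 1 : ℝ) = β from rfl, show (![α,β,γ] 2 : ℝ) = γ from rfl,
    show (![a,b,c] 0 : V) = a from rfl, show (![a,b,c] 1 : V) = b from rfl,
    show (![a,b,c] 2 : V) = c from rfl, hp] at h

lemma st8_exposed_extreme {P : Set V} {a b c : ℝ} (hP : ∀ p ∈ P, a * p.1 + b * p.2 ≤ c)
    {v : V} (hv : v ∈ P) (hvc : a * v.1 + b * v.2 = c)
    (huniq : ∀ p ∈ P, a * p.1 + b * p.2 = c → p = v) :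
    v ∈ P.extremePoints ℝ := by
  refine ⟨hv, fun x₁ h₁ x₂ h₂ hseg => ?_⟩
  obtain ⟨u, w, hu, hw, huw, heq⟩ := hseg
  have h1 : v.1 = u * x₁.1 + w * x₂.1 := by rw [← heq]; simp
  have h2 : v.2 = u * x₁.2 + w * x₂.2 := by rw [← heq]; simp
  have hA := mul_le_mul_of_nonneg_left (hP x₁ h₁) hu.le
  have hB := mul_le_mul_of_nonneg_left (hP x₂ h₂) hw.le
  have hsum : u * (a * x₁.1 + b * x₁.2) + w * (a * x₂.1 + b * x₂.2) = c := by
    rw [h1, h2] at hvc; nlinarith [hvc]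
  have huc : u * c + w * c = c := by rw [← add_mul, huw, one_mul]
  have e1 : a * x₁.1 + b * x₁.2 = c := mul_left_cancel₀ (ne_of_gt hu) (by linarith)
  have e2 : a * x₂.1 + b * x₂.2 = c := mul_left_cancel₀ (ne_of_gt hw) (by linarith)
  exact huniq x₁ h₁ e1

lemma st8_interior_lt {P : Set V} {a b c : ℝ} (hab : ¬(a = 0 ∧ b = 0))
    (hP : ∀ p ∈ P, a * p.1 + b * p.2 ≤ c) {p : V} (hp : p ∈ interior P) :
    a * p.1 + b * p.2 < c := by
  obtain ⟨ε, hε, hball⟩ := Metric.mem_nhds_iff.mp (mem_interior_iff_mem_nhds.mp hp)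
  set δ : ℝ := ε / (2 * (|a| + |b| + 1)) with hδdef
  have hden : (0:ℝ) < 2 * (|a| + |b| + 1) := by positivity
  have hδ : 0 < δ := by positivity
  have hqP : ((p.1 + δ * a, p.2 + δ * b) : V) ∈ P := by
    apply hball
    have hd : dist ((p.1 + δ * a, p.2 + δ * b) : V) p = max (|δ * a|) (|δ * b|) := by
      rw [Prod.dist_eq]; simp [Real.dist_eq, abs_mul]
    rw [Metric.mem_ball, hd]
    have h1 : |δ * a| < ε := by
      rw [abs_mul, abs_of_pos hδ]
      calc δ * |a| ≤ δ * (|a| + |b| + 1) := by nlinarith [abs_nonneg b]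
        _ = ε / 2 := by rw [hδdef]; field_simp
        _ < ε := by linarith
    have h2 : |δ * b| < ε := by
      rw [abs_mul, abs_of_pos hδ]
      calc δ * |b| ≤ δ * (|a| + |b| + 1) := by nlinarith [abs_nonneg a]
        _ = ε / 2 := by rw [hδdef]; field_simp
        _ < ε := by linarith
    exact max_lt h1 h2
  have hab2 : 0 < a ^ 2 + b ^ 2 := by
    rcases not_and_or.mp hab with h | h <;> positivity
  have hq := hP _ hqP
  simp only at hq
  nlinarith [mul_pos hδ hab2]

/-- The H-representation of the pentagon. -/
def st8H (s : ℕ) : Set V :=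
  {p | -1 ≤ p.1 ∧ p.1 - p.2 ≤ 1 ∧ p.2 - p.1 ≤ (s : ℝ) - 1 ∧
    ((s : ℝ) + 1) * p.1 - p.2 ≤ 1 ∧ p.2 - (s : ℝ) * p.1 ≤ (s : ℝ) - 1}

/-- The open version of the H-representation. -/
def st8O (s : ℕ) : Set V :=
  {p | -1 < p.1 ∧ p.1 - p.2 < 1 ∧ p.2 - p.1 < (s : ℝ) - 1 ∧
    ((s : ℝ) + 1) * p.1 - p.2 < 1 ∧ p.2 - (s : ℝ) * p.1 < (s : ℝ) - 1}

/-- The summand triangle. -/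
def st8T (s : ℕ) : Set V :=
  convexHull ℝ {((-1 : ℝ), (-2 : ℝ)), ((-1 : ℝ), (-1 : ℝ)), ((0 : ℝ), (s : ℝ) - 1)}

lemma st8_convex_H (s : ℕ) : Convex ℝ (st8H s) := by
  have h1 : Convex ℝ {p : V | -1 ≤ p.1} :=
    convex_halfSpace_ge ⟨fun x y => rfl, fun c x => rfl⟩ (-1)
  have h2 : Convex ℝ {p : V | p.1 - p.2 ≤ 1} :=
    convex_halfSpace_le ⟨fun x y => by simp; ring, fun c x => by simp; ring⟩ 1
  have h3 : Convex ℝ {p : V | p.2 - p.1 ≤ (s:ℝ) - 1} :=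
    convex_halfSpace_le ⟨fun x y => by simp; ring, fun c x => by simp; ring⟩ _
  have h4 : Convex ℝ {p : V | ((s:ℝ)+1) * p.1 - p.2 ≤ 1} :=
    convex_halfSpace_le ⟨fun x y => by simp; ring, fun c x => by simp; ring⟩ 1
  have h5 : Convex ℝ {p : V | p.2 - (s:ℝ) * p.1 ≤ (s:ℝ) - 1} :=
    convex_halfSpace_le ⟨fun x y => by simp; ring, fun c x => by simp; ring⟩ _
  exact fun x hx y hy a b ha hb hab =>
    ⟨h1 hx.1 hy.1 ha hb hab, h2 hx.2.1 hy.2.1 ha hb hab, h3 hx.2.2.1 hy.2.2.1 ha hb hab,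
     h4 hx.2.2.2.1 hy.2.2.2.1 ha hb hab, h5 hx.2.2.2.2 hy.2.2.2.2 ha hb hab⟩

lemma st8_P_subset_H (s : ℕ) (hs : 2 ≤ s) : cfoPentagon s ⊆ st8H s := by
  have hs' : (2:ℝ) ≤ (s:ℕ) := by exact_mod_cast hs
  apply convexHull_min _ (st8_convex_H s)
  intro p hp
  simp only [Set.mem_insert_iff, Set.mem_singleton_iff] at hp
  rcases hp with rfl | rfl | rfl | rfl | rfl <;>
    (simp only [st8H, Set.mem_setOf_eq]; refine ⟨?_, ?_, ?_, ?_, ?_⟩ <;> nlinarith)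

lemma st8_tri_rep (s : ℕ) (hs : 2 ≤ s) {p : V} (h1 : -1 ≤ p.1)
    (h2 : ((s:ℝ)+1) * p.1 - p.2 ≤ 1 - s) (h3 : p.2 - (s:ℝ) * p.1 ≤ (s:ℝ) - 1) :
    p ∈ st8T s := by
  have hs' : (2:ℝ) ≤ (s:ℕ) := by exact_mod_cast hs
  apply st8_mem_hull3 (α := (s:ℝ) * p.1 - p.2 + s - 1) (β := p.2 - ((s:ℝ)+1) * p.1 - s + 1)
    (γ := 1 + p.1)
  · linarith
  · linarith
  · linarith
  · ring
  · simp only [Prod.smul_mk, smul_eq_mul, Prod.mk_add_mk, Prod.ext_iff]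
    constructor <;> ring

lemma st8_H_subset_sum (s : ℕ) (hs : 2 ≤ s) {p : V} (hp : p ∈ st8H s) :
    p ∈ segment ℝ ((0 : ℝ), (0 : ℝ)) ((1 : ℝ), (1 : ℝ)) + st8T s := by
  obtain ⟨h1, h2, h3, h4, h5⟩ := hp
  have hs' : (2:ℝ) ≤ (s:ℕ) := by exact_mod_cast hs
  have hs0 : (0:ℝ) < s := by linarith
  have hs1 : (0:ℝ) < (s:ℝ) - 1 := by linarith
  set r : ℝ := (((s:ℝ)+1) * p.1 - p.2 + s - 1) / s with hr
  set t : ℝ := max 0 r with ht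
  have ht0 : 0 ≤ t := le_max_left _ _
  have htr : r ≤ t := le_max_right _ _
  have ht1 : t ≤ 1 := by
    apply max_le (by norm_num)
    rw [hr, div_le_one hs0]; linarith
  have htx : t ≤ p.1 + 1 := by
    apply max_le (by linarith)
    rw [hr, div_le_iff₀ hs0]; nlinarith
  have ht3 : t ≤ ((s:ℝ) - 1 - p.2 + s * p.1) / ((s:ℝ) - 1) := by
    apply max_le
    · apply div_nonneg _ hs1.le; linarith
    · rw [hr, div_le_div_iff₀ hs0 hs1]; nlinarith
  have hseg : ((t, t) : V) ∈ segment ℝ ((0 : ℝ), (0 : ℝ)) ((1 : ℝ), (1 : ℝ)) := by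
    refine ⟨1 - t, t, by linarith, ht0, by ring, ?_⟩
    simp [Prod.ext_iff]
  have htri : ((p.1 - t, p.2 - t) : V) ∈ st8T s := by
    apply st8_tri_rep s hs
    · simp; linarith
    · simp only
      have : r * s = ((s:ℝ)+1) * p.1 - p.2 + s - 1 := by
        rw [hr]; field_simp
      nlinarith
    · simp only
      have h3' : t * ((s:ℝ) - 1) ≤ (s:ℝ) - 1 - p.2 + s * p.1 := (le_div_iff₀ hs1).mp ht3
      nlinarith
  have := Set.add_mem_add hseg htri
  simpa using this

lemma st8_decomp (s : ℕ) (hs : 2 ≤ s) :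
    cfoPentagon s = segment ℝ ((0 : ℝ), (0 : ℝ)) ((1 : ℝ), (1 : ℝ)) + st8T s := by
  have hs' : (2:ℝ) ≤ (s:ℕ) := by exact_mod_cast hs
  have hs0 : (s:ℝ) ≠ 0 := by linarith
  rw [st8T, ← convexHull_pair, ← convexHull_add, cfoPentagon]
  apply le_antisymm
  · apply convexHull_mono
    intro p hp
    simp only [Set.mem_insert_iff, Set.mem_singleton_iff] at hp
    rcases hp with rfl | rfl | rfl | rfl | rfl
    · exact ⟨(0,0), by simp, ((-1:ℝ),(-2:ℝ)), by simp, by norm_num [Prod.ext_iff]⟩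
    · exact ⟨(1,1), by simp, ((-1:ℝ),(-2:ℝ)), by simp, by norm_num [Prod.ext_iff]⟩
    · exact ⟨(1,1), by simp, ((0:ℝ),(s:ℝ)-1), by simp, by norm_num [Prod.ext_iff]⟩
    · exact ⟨(0,0), by simp, ((0:ℝ),(s:ℝ)-1), by simp, by norm_num [Prod.ext_iff]⟩
    · exact ⟨(0,0), by simp, ((-1:ℝ),(-1:ℝ)), by simp, by norm_num [Prod.ext_iff]⟩
  · apply convexHull_min _ (convex_convexHull ℝ _)
    intro p hp
    obtain ⟨a, ha, b, hb, rfl⟩ := hp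
    simp only [Set.mem_insert_iff, Set.mem_singleton_iff] at ha hb
    have hsub := subset_convexHull ℝ ({((-1 : ℝ), (-2 : ℝ)), ((0 : ℝ), (-1 : ℝ)),
      ((1 : ℝ), (s : ℝ)), ((0 : ℝ), (s : ℝ) - 1), ((-1 : ℝ), (-1 : ℝ))} : Set V)
    have hzero : ((0:ℝ),(0:ℝ)) ∈ convexHull ℝ ({((-1 : ℝ), (-2 : ℝ)), ((0 : ℝ), (-1 : ℝ)),
        ((1 : ℝ), (s : ℝ)), ((0 : ℝ), (s : ℝ) - 1), ((-1 : ℝ), (-1 : ℝ))} : Set V) := by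
      have hseg : ((0:ℝ),(0:ℝ)) ∈ segment ℝ ((0 : ℝ), (-1 : ℝ)) ((0 : ℝ), (s : ℝ) - 1) := by
        refine ⟨((s:ℝ)-1)/s, 1/s, by apply div_nonneg <;> linarith,
          by apply div_nonneg <;> linarith, by field_simp; ring, ?_⟩
        simp only [Prod.smul_mk, smul_eq_mul, Prod.mk_add_mk, Prod.ext_iff]
        constructor
        · ring
        · field_simp; ring
      rw [← convexHull_pair] at hseg
      exact convexHull_mono (by intro x hx; simp at hx; rcases hx with rfl|rfl <;> simp) hseg
    rcases ha with rfl | rfl <;> rcases hb with rfl | rfl | rfl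
    · have he : ((0:ℝ),(0:ℝ)) + ((-1:ℝ),(-2:ℝ)) = ((-1:ℝ),(-2:ℝ)) := by norm_num [Prod.ext_iff]
      beta_reduce; rw [he]; exact hsub (by simp)
    · have he : ((0:ℝ),(0:ℝ)) + ((-1:ℝ),(-1:ℝ)) = ((-1:ℝ),(-1:ℝ)) := by norm_num [Prod.ext_iff]
      beta_reduce; rw [he]; exact hsub (by simp)
    · have he : ((0:ℝ),(0:ℝ)) + ((0:ℝ),(s:ℝ)-1) = ((0:ℝ),(s:ℝ)-1) := by norm_num [Prod.ext_iff]
      beta_reduce; rw [he]; exact hsub (by simp)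
    · have he : ((1:ℝ),(1:ℝ)) + ((-1:ℝ),(-2:ℝ)) = ((0:ℝ),(-1:ℝ)) := by norm_num [Prod.ext_iff]
      beta_reduce; rw [he]; exact hsub (by simp)
    · have he : ((1:ℝ),(1:ℝ)) + ((-1:ℝ),(-1:ℝ)) = ((0:ℝ),(0:ℝ)) := by norm_num [Prod.ext_iff]
      beta_reduce; rw [he]; exact hzero
    · have he : ((1:ℝ),(1:ℝ)) + ((0:ℝ),(s:ℝ)-1) = ((1:ℝ),(s:ℝ)) := by
        norm_num [Prod.ext_iff]
      beta_reduce; rw [he]; exact hsub (by simp)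

lemma st8_open_O (s : ℕ) : IsOpen (st8O s) := by
  have : st8O s = {p : V | -1 < p.1} ∩ ({p : V | p.1 - p.2 < 1} ∩ ({p : V | p.2 - p.1 < (s:ℝ) - 1}
      ∩ ({p : V | ((s:ℝ)+1) * p.1 - p.2 < 1} ∩ {p : V | p.2 - (s:ℝ) * p.1 < (s:ℝ) - 1}))) := rfl
  rw [this]
  refine (isOpen_lt continuous_const continuous_fst).inter (.inter ?_ (.inter ?_ (.inter ?_ ?_)))
    <;> apply isOpen_lt <;> fun_prop

lemma st8_interior (s : ℕ) (hs : 2 ≤ s) (P : Set V) (hPH : P = st8H s) :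
    interior P = st8O s := by
  apply le_antisymm
  · intro p hp
    have hPsub : ∀ q : V, q ∈ P → q ∈ st8H s := fun q hq => hPH ▸ hq
    have c1 := st8_interior_lt (a := -1) (b := 0) (c := 1) (by norm_num)
      (fun q hq => by have := (hPsub q hq).1; simp; linarith) hp
    have c2 := st8_interior_lt (a := 1) (b := -1) (c := 1) (by norm_num)
      (fun q hq => by have := (hPsub q hq).2.1; linarith) hp
    have c3 := st8_interior_lt (a := -1) (b := 1) (c := (s:ℝ) - 1) (by norm_num)
      (fun q hq => by have := (hPsub q hq).2.2.1; linarith) hp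
    have c4 := st8_interior_lt (a := (s:ℝ)+1) (b := -1) (c := 1)
      (by push_neg; intro _; norm_num)
      (fun q hq => by have := (hPsub q hq).2.2.2.1; linarith) hp
    have c5 := st8_interior_lt (a := -(s:ℝ)) (b := 1) (c := (s:ℝ) - 1) (by norm_num)
      (fun q hq => by have := (hPsub q hq).2.2.2.2; linarith) hp
    exact ⟨by linarith, by linarith, by linarith, by linarith, by linarith⟩
  · rw [hPH]
    apply interior_maximal _ (st8_open_O s)
    intro p hp
    exact ⟨hp.1.le, hp.2.1.le, hp.2.2.1.le, hp.2.2.2.1.le, hp.2.2.2.2.le⟩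

lemma st8_int_H (s : ℕ) {m n : ℤ} (h : toR (m, n) ∈ st8H s) :
    -1 ≤ m ∧ m - n ≤ 1 ∧ n - m ≤ (s:ℤ) - 1 ∧ ((s:ℤ)+1) * m - n ≤ 1 ∧
      n - (s:ℤ) * m ≤ (s:ℤ) - 1 := by
  obtain ⟨h1, h2, h3, h4, h5⟩ := h
  simp only [toR] at h1 h2 h3 h4 h5
  have g1 : ((-1:ℤ):ℝ) ≤ ((m:ℤ):ℝ) := by push_cast; linarith
  have g2 : ((m - n:ℤ):ℝ) ≤ ((1:ℤ):ℝ) := by push_cast; linarith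
  have g3 : ((n - m:ℤ):ℝ) ≤ (((s:ℤ) - 1:ℤ):ℝ) := by push_cast; linarith
  have g4 : ((((s:ℤ)+1) * m - n:ℤ):ℝ) ≤ ((1:ℤ):ℝ) := by push_cast; linarith
  have g5 : ((n - (s:ℤ) * m:ℤ):ℝ) ≤ (((s:ℤ) - 1:ℤ):ℝ) := by push_cast; linarith
  exact ⟨by exact_mod_cast g1, by exact_mod_cast g2, by exact_mod_cast g3,
    by exact_mod_cast g4, by exact_mod_cast g5⟩

lemma st8_int_m_le_one (s : ℕ) (hs : 2 ≤ s) {m n : ℤ}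
    (h4 : ((s:ℤ)+1) * m - n ≤ 1) (h3 : n - m ≤ (s:ℤ) - 1) : m ≤ 1 := by
  have hsm : (s:ℤ) * m ≤ (s:ℤ) * 1 := by nlinarith
  exact le_of_mul_le_mul_left hsm (by omega)

lemma st8_lattice_frontier (s : ℕ) (hs : 2 ≤ s) {m n : ℤ}
    (h : toR (m, n) ∈ st8H s) (hni : toR (m, n) ∉ st8O s) :
    (m = -1 ∧ n = -2) ∨ (m = 0 ∧ n = -1) ∨ (m = 1 ∧ n = (s:ℤ)) ∨
      (m = 0 ∧ n = (s:ℤ) - 1) ∨ (m = -1 ∧ n = -1) := by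
  obtain ⟨h1, h2, h3, h4, h5⟩ := st8_int_H s h
  have hm1 : m ≤ 1 := st8_int_m_le_one s hs h4 h3
  have hd : ¬(-1 < m) ∨ ¬(m - n < 1) ∨ ¬(n - m < (s:ℤ) - 1) ∨
      ¬(((s:ℤ)+1) * m - n < 1) ∨ ¬(n - (s:ℤ) * m < (s:ℤ) - 1) := by
    by_contra hc
    push_neg at hc
    obtain ⟨c1, c2, c3, c4, c5⟩ := hc
    apply hni
    refine ⟨?_, ?_, ?_, ?_, ?_⟩ <;> simp only [toR]
    · exact_mod_cast c1
    · exact_mod_cast c2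
    · push_cast; exact_mod_cast c3
    · push_cast; exact_mod_cast c4
    · push_cast; exact_mod_cast c5
  interval_cases m <;> omega

lemma st8_lattice_interior (s : ℕ) (hs : 2 ≤ s) {m n : ℤ} (h : toR (m, n) ∈ st8O s) :
    m = 0 ∧ 0 ≤ n ∧ n ≤ (s:ℤ) - 2 := by
  obtain ⟨h1, h2, h3, h4, h5⟩ := h
  simp only [toR] at h1 h2 h3 h4 h5
  have e1 : ((-1:ℤ):ℝ) < ((m:ℤ):ℝ) := by push_cast; linarith
  have e2 : ((m - n:ℤ):ℝ) < ((1:ℤ):ℝ) := by push_cast; linarith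
  have e3 : ((n - m:ℤ):ℝ) < (((s:ℤ) - 1:ℤ):ℝ) := by push_cast; linarith
  have e4 : ((((s:ℤ)+1) * m - n:ℤ):ℝ) < ((1:ℤ):ℝ) := by push_cast; linarith
  have e5 : ((n - (s:ℤ) * m:ℤ):ℝ) < (((s:ℤ) - 1:ℤ):ℝ) := by push_cast; linarith
  have g1 : (-1:ℤ) < m := by exact_mod_cast e1
  have g2 : m - n < 1 := by exact_mod_cast e2
  have g3 : n - m < (s:ℤ) - 1 := by exact_mod_cast e3
  have g4 : ((s:ℤ)+1) * m - n < 1 := by exact_mod_cast e4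
  have g5 : n - (s:ℤ) * m < (s:ℤ) - 1 := by exact_mod_cast e5
  have hm1 : m ≤ 1 := st8_int_m_le_one s hs g4.le g3.le
  interval_cases m <;> omega

lemma st8_extremes (s : ℕ) (hs : 2 ≤ s) (hPeq : cfoPentagon s = st8H s) :
    ({((-1:ℝ),(-2:ℝ)), ((0:ℝ),(-1:ℝ)), ((1:ℝ),(s:ℝ)), ((0:ℝ),(s:ℝ)-1), ((-1:ℝ),(-1:ℝ))} : Set V)
      ⊆ (cfoPentagon s).extremePoints ℝ := by
  have hs' : (2:ℝ) ≤ (s:ℕ) := by exact_mod_cast hs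
  have hs0 : (s:ℝ) ≠ 0 := by linarith
  have hs1 : (s:ℝ) - 1 ≠ 0 := by linarith
  have hmem : ∀ q ∈ ({((-1:ℝ),(-2:ℝ)), ((0:ℝ),(-1:ℝ)), ((1:ℝ),(s:ℝ)), ((0:ℝ),(s:ℝ)-1),
      ((-1:ℝ),(-1:ℝ))} : Set V), q ∈ cfoPentagon s :=
    fun q hq => subset_convexHull ℝ _ hq
  have hH : ∀ p ∈ cfoPentagon s, p ∈ st8H s := fun p hp => hPeq ▸ hp
  intro v hv
  simp only [Set.mem_insert_iff, Set.mem_singleton_iff] at hv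
  rcases hv with rfl | rfl | rfl | rfl | rfl
  · apply st8_exposed_extreme (a := -1) (b := -1) (c := 3)
    · intro p hp; obtain ⟨h1, h2, _, _, _⟩ := hH p hp; linarith
    · exact hmem _ (by simp)
    · norm_num
    · intro p hp hfp
      obtain ⟨h1, h2, _, _, _⟩ := hH p hp
      have e1 : p.1 = -1 := by linarith
      have e2 : p.2 = -2 := by linarith
      exact Prod.ext e1 e2
  · apply st8_exposed_extreme (a := (s:ℝ)+2) (b := -2) (c := 2)
    · intro p hp; obtain ⟨_, h2, _, h4, _⟩ := hH p hp; linarith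
    · exact hmem _ (by simp)
    · ring
    · intro p hp hfp
      obtain ⟨_, h2, _, h4, _⟩ := hH p hp
      have t2 : p.1 - p.2 = 1 := by linarith
      have t4 : ((s:ℝ)+1) * p.1 - p.2 = 1 := by linarith
      have hx : (s:ℝ) * p.1 = 0 := by linear_combination t4 - t2
      have e1 : p.1 = 0 := by
        rcases mul_eq_zero.mp hx with h | h
        · exact absurd h hs0
        · exact h
      exact Prod.ext e1 (show p.2 = -1 by linarith)
  · apply st8_exposed_extreme (a := (s:ℝ)) (b := 0) (c := (s:ℝ))
    · intro p hp; obtain ⟨_, _, h3, h4, _⟩ := hH p hp; linarith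
    · exact hmem _ (by simp)
    · ring
    · intro p hp hfp
      obtain ⟨_, _, h3, h4, _⟩ := hH p hp
      have t4 : ((s:ℝ)+1) * p.1 - p.2 = 1 := by linarith
      have t3 : p.2 - p.1 = (s:ℝ) - 1 := by linarith
      have e1 : p.1 = 1 := by
        have hx : (s:ℝ) * p.1 = (s:ℝ) * 1 := by linear_combination t4 + t3
        exact mul_left_cancel₀ hs0 hx
      exact Prod.ext e1 (show p.2 = (s:ℝ) by linarith)
  · apply st8_exposed_extreme (a := -((s:ℝ)+1)) (b := 2) (c := 2*((s:ℝ)-1))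
    · intro p hp; obtain ⟨_, _, h3, _, h5⟩ := hH p hp; linarith
    · exact hmem _ (by simp)
    · ring
    · intro p hp hfp
      obtain ⟨_, _, h3, _, h5⟩ := hH p hp
      have t3 : p.2 - p.1 = (s:ℝ) - 1 := by linarith
      have t5 : p.2 - (s:ℝ) * p.1 = (s:ℝ) - 1 := by linarith
      have hx : ((s:ℝ) - 1) * p.1 = ((s:ℝ) - 1) * 0 := by linear_combination t3 - t5
      have e1 : p.1 = 0 := mul_left_cancel₀ hs1 hx
      exact Prod.ext e1 (show p.2 = (s:ℝ) - 1 by linarith)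
  · apply st8_exposed_extreme (a := -((s:ℝ)+1)) (b := 1) (c := (s:ℝ))
    · intro p hp; obtain ⟨h1, _, _, _, h5⟩ := hH p hp; linarith
    · exact hmem _ (by simp)
    · ring
    · intro p hp hfp
      obtain ⟨h1, _, _, _, h5⟩ := hH p hp
      have e1 : p.1 = -1 := by linarith
      have hsp : (s:ℝ) * p.1 = -(s:ℝ) := by rw [e1]; ring
      have e2 : p.2 = -1 := by linarith
      exact Prod.ext e1 e2


/-- For every integer `s ≥ 2`: (i) `𝒫^s` equals the Minkowski sum of the
segment `conv{(0,0),(1,1)}` and the triangle `conv{(−1,−2),(−1,−1),(0,s−1)}`; (ii) `𝒫^s`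
is a toric diagram with exactly five extreme points; (iii) the interior of `𝒫^s` contains
exactly `s − 1` lattice points. -/

theorem statement8 (s : ℕ) (hs : 2 ≤ s) :
    cfoPentagon s = segment ℝ ((0 : ℝ), (0 : ℝ)) ((1 : ℝ), (1 : ℝ)) +
      convexHull ℝ {((-1 : ℝ), (-2 : ℝ)), ((-1 : ℝ), (-1 : ℝ)), ((0 : ℝ), (s : ℝ) - 1)} ∧
    IsToricDiagram (cfoPentagon s) ∧
    ((cfoPentagon s).extremePoints ℝ).ncard = 5 ∧
    (interior (cfoPentagon s) ∩ latticePoints).ncard = s - 1 := by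
  have hs' : (2:ℝ) ≤ (s:ℕ) := by exact_mod_cast hs
  have hdec := st8_decomp s hs
  have hPeq : cfoPentagon s = st8H s := by
    apply le_antisymm (st8_P_subset_H s hs)
    intro p hp
    rw [hdec]
    exact st8_H_subset_sum s hs hp
  have hint : interior (cfoPentagon s) = st8O s := st8_interior s hs _ hPeq
  have hclosed : IsClosed (cfoPentagon s) :=
    ((Set.toFinite _).isCompact_convexHull (𝕜 := ℝ)).isClosed
  have hfront : frontier (cfoPentagon s) = cfoPentagon s \ interior (cfoPentagon s) :=
    hclosed.frontier_eq
  have hVext := st8_extremes s hs hPeq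
  -- the set of extreme points
  have hext : (cfoPentagon s).extremePoints ℝ =
      ({((-1:ℝ),(-2:ℝ)), ((0:ℝ),(-1:ℝ)), ((1:ℝ),(s:ℝ)), ((0:ℝ),(s:ℝ)-1), ((-1:ℝ),(-1:ℝ))}
        : Set V) :=
    le_antisymm (extremePoints_convexHull_subset) hVext
  -- frontier lattice points are extreme
  have hfrontier_ext : ∀ x ∈ frontier (cfoPentagon s), x ∈ latticePoints →
      x ∈ (cfoPentagon s).extremePoints ℝ := by
    intro x hx hlat
    obtain ⟨⟨m, n⟩, rfl⟩ := hlat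
    rw [hfront] at hx
    have hH : toR (m, n) ∈ st8H s := hPeq ▸ hx.1
    have hO : toR (m, n) ∉ st8O s := fun hc => hx.2 (by rw [hint]; exact hc)
    apply hVext
    rcases st8_lattice_frontier s hs hH hO with ⟨rfl, rfl⟩ | ⟨rfl, rfl⟩ | ⟨rfl, rfl⟩ |
      ⟨rfl, rfl⟩ | ⟨rfl, rfl⟩ <;>
      simp [toR, Prod.ext_iff] <;> norm_num
  refine ⟨by rw [hdec]; rfl, ⟨?_, ?_, hfrontier_ext⟩, ?_, ?_⟩
  · -- lattice polytope
    refine ⟨{(-1, -2), (0, -1), (1, (s:ℤ)), (0, (s:ℤ) - 1), (-1, -1)}, by simp, ?_⟩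
    rw [cfoPentagon]
    congr 1
    simp only [Finset.coe_insert, Finset.coe_singleton, Set.image_insert_eq,
      Set.image_singleton, toR]
    push_cast
    rfl
  · -- interior nonempty
    refine ⟨((0:ℝ), (0:ℝ)), ?_⟩
    rw [hint]
    exact ⟨by norm_num, by norm_num, by norm_num; linarith, by norm_num, by norm_num; linarith⟩
  · -- five extreme points
    rw [hext]
    rw [Set.ncard_insert_of_notMem (by norm_num [Prod.ext_iff]; try (intro h; linarith))
        (Set.toFinite _),
      Set.ncard_insert_of_notMem (by norm_num [Prod.ext_iff]; try (intro h; linarith))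
        (Set.toFinite _),
      Set.ncard_insert_of_notMem (by norm_num [Prod.ext_iff]; try (intro h; linarith))
        (Set.toFinite _),
      Set.ncard_insert_of_notMem (by norm_num [Prod.ext_iff]; try (intro h; linarith))
        (Set.toFinite _),
      Set.ncard_singleton]
  · -- interior lattice point count
    have hset : interior (cfoPentagon s) ∩ latticePoints =
        ↑((Finset.range (s - 1)).image (fun k : ℕ => (((0:ℝ), (k:ℝ)) : V))) := by
      ext p
      constructor
      · rintro ⟨hpI, ⟨⟨m, n⟩, rfl⟩⟩
        rw [hint] at hpI
        obtain ⟨hm, hn0, hn1⟩ := st8_lattice_interior s hs hpI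
        subst hm
        simp only [Finset.coe_image, Finset.coe_range, Set.mem_image, Set.mem_Iio]
        refine ⟨n.toNat, by omega, ?_⟩
        simp only [toR, Prod.ext_iff]
        constructor
        · norm_num
        · have : ((n.toNat : ℤ) : ℝ) = ((n : ℤ) : ℝ) := by
            rw [Int.toNat_of_nonneg hn0]
          exact_mod_cast this
      · intro hp
        simp only [Finset.coe_image, Finset.coe_range, Set.mem_image, Set.mem_Iio] at hp
        obtain ⟨k, hk, rfl⟩ := hp
        have hkR : (k:ℝ) ≤ (s:ℝ) - 2 := by
          have : (k:ℕ) + 2 ≤ s := by omega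
          have := (Nat.cast_le (α := ℝ)).mpr this
          push_cast at this
          linarith
        constructor
        · rw [hint]
          refine ⟨by norm_num, ?_, ?_, ?_, ?_⟩ <;> simp only <;> push_cast
          · have : (0:ℝ) ≤ (k:ℝ) := Nat.cast_nonneg k
            linarith
          · linarith
          · have : (0:ℝ) ≤ (k:ℝ) := Nat.cast_nonneg k
            linarith
          · linarith
        · exact ⟨(0, (k:ℤ)), by simp [toR]⟩
    rw [hset, Set.ncard_coe_finset, Finset.card_image_of_injective _
      (fun a b h => Nat.cast_injective (congrArg Prod.snd h)), Finset.card_range]
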